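/- If M is a quasi-projective R-module, then for every short exact sequence 0 → A → M → B → 0 with A and B quasi-Gorenstein projective, the sequence 0 → Hom(B, M) → Hom(M, M) → Hom(A, M) → 0 is exact; that is, M is quasi-injective relative to the exact structure on the subcategory of quasi-Gorenstein projective modules. -/

import Mathlib

open CategoryTheory

universe u
variable {R : Type u} [Ring R]

/-- A module `Q` is quasi-projective if every homomorphism from `Q` to a quotient
of `Q` lifts to an endomorphism of `Q`. -/
def QuasiProjective (Q : ModuleCat.{u} R) : Prop :=
  ∀ (B : ModuleCat.{u} R) (g : Q ⟶ B), Function.Surjective g →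
    ∀ f : Q ⟶ B, ∃ h : Q ⟶ Q, h ≫ g = f

/-- `M` is quasi-Gorenstein projective if it is a syzygy of an exact complex of
projective modules (given by short exact sequences `0 → K (n+1) → P n → K n → 0`)
that remains exact under `Hom(-, Q)` for every quasi-projective module `Q`. -/
def QuasiGorensteinProjective (M : ModuleCat.{u} R) : Prop :=
  ∃ (K P : ℤ → ModuleCat.{u} R) (ι : ∀ n, K (n + 1) ⟶ P n) (π : ∀ n, P n ⟶ K n),
    (∀ n, Module.Projective R (P n)) ∧
    (∀ n, Function.Injective (ι n)) ∧
    (∀ n, Function.Surjective (π n)) ∧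
    (∀ n, Function.Exact (ι n) (π n)) ∧
    (∀ n (Q : ModuleCat.{u} R), QuasiProjective Q →
      ∀ f : K (n + 1) ⟶ Q, ∃ g : P n ⟶ Q, ι n ≫ g = f) ∧
    Nonempty (M ≅ K 0)

/-- If `M` is quasi-projective, then for every short exact sequence
`0 → A → M → B → 0` with `A` and `B` quasi-Gorenstein projective, the sequence
`0 → Hom(B, M) → Hom(M, M) → Hom(A, M) → 0` is exact. -/
theorem quasiProjective_relatively_quasiInjective
    (M : ModuleCat.{u} R) (hM : QuasiProjective M)
    {A B : ModuleCat.{u} R} (f : A ⟶ M) (g : M ⟶ B)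
    (hf : Function.Injective f) (hg : Function.Surjective g)
    (hfg : Function.Exact f g)
    (hA : QuasiGorensteinProjective A) (hB : QuasiGorensteinProjective B) :
    Function.Injective (fun φ : B ⟶ M => g ≫ φ) ∧
    Function.Exact (fun φ : B ⟶ M => g ≫ φ) (fun ψ : M ⟶ M => f ≫ ψ) ∧
    Function.Surjective (fun ψ : M ⟶ M => f ≫ ψ) := by
  classical
  refine ⟨?_, ?_, ?_⟩
  · -- injectivity
    intro φ φ' h
    have h' : g ≫ φ = g ≫ φ' := h
    apply ModuleCat.hom_ext; apply LinearMap.ext; intro b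
    obtain ⟨m, rfl⟩ := hg b
    have : (g ≫ φ) m = (g ≫ φ') m := by rw [h']
    exact this
  · -- exactness at the middle
    intro ψ
    constructor
    · intro h0
      have h0' : f ≫ ψ = 0 := h0
      have hker : LinearMap.ker g.hom ≤ LinearMap.ker ψ.hom := by
        intro x hx
        obtain ⟨a, rfl⟩ := (hfg x).mp (LinearMap.mem_ker.mp hx)
        have : (f ≫ ψ) a = (0 : A ⟶ M) a := by rw [h0']
        exact this
      let eqv := g.hom.quotKerEquivOfSurjective hg
      let φ : B ⟶ M := ModuleCat.ofHom <|
        ((LinearMap.ker g.hom).liftQ ψ.hom hker).comp eqv.symm.toLinearMap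
      refine ⟨φ, ?_⟩
      apply ModuleCat.hom_ext; apply LinearMap.ext; intro m
      have h1 : eqv (Submodule.Quotient.mk m) = g m := rfl
      have h2 : eqv.symm (g m) = Submodule.Quotient.mk m :=
        (LinearEquiv.symm_apply_eq _).mpr h1.symm
      show φ (g m) = ψ m
      show ((LinearMap.ker g.hom).liftQ ψ.hom hker) (eqv.symm (g m)) = ψ m
      rw [h2]
      exact Submodule.liftQ_apply _ _ _
    · rintro ⟨φ, rfl⟩
      apply ModuleCat.hom_ext; apply LinearMap.ext; intro a
      show φ (g (f a)) = 0
      rw [hfg.apply_apply_eq_zero, map_zero]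
  · -- surjectivity
    obtain ⟨K, P, ι, π, hP, -, hπsurj, hexact, hlift, ⟨e⟩⟩ := hB
    intro α
    have : Module.Projective R (P 0) := hP 0
    obtain ⟨t, ht⟩ := Module.projective_lifting_property g.hom
      (e.inv.hom.comp (π 0).hom) hg
    let fe := LinearEquiv.ofInjective f.hom hf
    have hfe' : ∀ z : LinearMap.range f.hom, f (fe.symm z) = (z : ↑M) := by
      intro z
      conv_rhs => rw [← fe.apply_symm_apply z]
      rw [LinearEquiv.ofInjective_apply]
    have hgt : ∀ p : ↑(P 0), g (t p) = e.inv (π 0 p) := fun p => LinearMap.congr_fun ht p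
    have hmem : ∀ k : ↑(K (0 + 1)), t (ι 0 k) ∈ LinearMap.range f.hom := by
      intro k
      apply (hfg _).mp
      have h2 : π 0 (ι 0 k) = 0 := (hexact 0).apply_apply_eq_zero k
      rw [hgt, h2, map_zero]
    let u : K (0 + 1) ⟶ A := ModuleCat.ofHom <|
      fe.symm.toLinearMap.comp
        (LinearMap.codRestrict (LinearMap.range f.hom)
          ((t : ↑(P 0) →ₗ[R] ↑M).comp (ι 0).hom) hmem)
    have hu : ∀ k, f (u k) = t (ι 0 k) := fun k => hfe' ⟨t (ι 0 k), hmem k⟩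
    obtain ⟨v, hv⟩ := hlift 0 M hM (ModuleCat.ofHom (α.hom.comp u.hom))
    have hvk : ∀ k, v (ι 0 k) = α (u k) := fun k => LinearMap.congr_fun (congrArg ModuleCat.Hom.hom hv) k
    let d : (↑M × ↑(P 0)) →ₗ[R] ↑B :=
      g.hom.comp (LinearMap.fst R ↑M ↑(P 0)) -
        (e.inv.hom.comp (π 0).hom).comp (LinearMap.snd R ↑M ↑(P 0))
    have hd : ∀ mp : ↑M × ↑(P 0), d mp = g mp.1 - e.inv (π 0 mp.2) := fun _ => rfl
    let D := LinearMap.ker d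
    let pr1 : D →ₗ[R] ↑M := (LinearMap.fst R ↑M ↑(P 0)).comp D.subtype
    have hmemD : ∀ x : D, g (x : ↑M × ↑(P 0)).1 = e.inv (π 0 (x : ↑M × ↑(P 0)).2) := by
      intro x
      have h' := LinearMap.mem_ker.mp x.2
      rw [hd] at h'
      exact sub_eq_zero.mp h'
    have hpr1 : Function.Surjective pr1 := by
      intro m
      obtain ⟨p, hp⟩ := hπsurj 0 (e.hom (g m))
      have hmem1 : ((m, p) : ↑M × ↑(P 0)) ∈ D := by
        rw [LinearMap.mem_ker, hd]
        dsimp only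
        rw [hp]
        have h3 : (e.hom ≫ e.inv) (g m) = (𝟙 B) (g m) := by rw [e.hom_inv_id]
        have h4 : e.inv (e.hom (g m)) = g m := h3
        rw [h4, sub_self]
      exact ⟨⟨(m, p), hmem1⟩, rfl⟩
    have hmemw : ∀ x : D,
        (x : ↑M × ↑(P 0)).1 - t (x : ↑M × ↑(P 0)).2 ∈ LinearMap.range f.hom := by
      intro x
      apply (hfg _).mp
      rw [map_sub, hmemD x, hgt, sub_self]
    let w := LinearMap.codRestrict (LinearMap.range f.hom)
      (((LinearMap.fst R ↑M ↑(P 0)) -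
        (t : ↑(P 0) →ₗ[R] ↑M).comp (LinearMap.snd R ↑M ↑(P 0))).comp D.subtype) hmemw
    let s : D →ₗ[R] ↑M :=
      v.hom.comp ((LinearMap.snd R ↑M ↑(P 0)).comp D.subtype) +
        (α.hom.comp fe.symm.toLinearMap).comp w
    have hs : ∀ x : D, s x = v (x : ↑M × ↑(P 0)).2 + α (fe.symm (w x)) := fun _ => rfl
    have hwx : ∀ x : D, ((w x : LinearMap.range f.hom) : ↑M) =
        (x : ↑M × ↑(P 0)).1 - t (x : ↑M × ↑(P 0)).2 := fun _ => rfl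
    have hker : LinearMap.ker pr1 ≤ LinearMap.ker s := by
      intro x hx
      have hm : (x : ↑M × ↑(P 0)).1 = 0 := LinearMap.mem_ker.mp hx
      have h1 : e.inv (π 0 (x : ↑M × ↑(P 0)).2) = 0 := by rw [← hmemD x, hm, map_zero]
      have h2 : π 0 (x : ↑M × ↑(P 0)).2 = 0 := by
        have h3 : (e.inv ≫ e.hom) (π 0 (x : ↑M × ↑(P 0)).2) =
            (𝟙 (K 0)) (π 0 (x : ↑M × ↑(P 0)).2) := by rw [e.inv_hom_id]
        have h4 : e.hom (e.inv (π 0 (x : ↑M × ↑(P 0)).2)) = π 0 (x : ↑M × ↑(P 0)).2 := h3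
        rw [← h4, h1, map_zero]
      obtain ⟨k, hk⟩ := (hexact 0 _).mp h2
      have h5 : fe.symm (w x) = -(u k) := by
        apply hf
        rw [hfe' (w x), hwx x, hm, zero_sub, ← hk, ← hu k, ← map_neg]
      show s x = 0
      rw [hs, h5, ← hk, hvk, map_neg, add_neg_cancel]
    let eqv2 := pr1.quotKerEquivOfSurjective hpr1
    let ψ : M ⟶ M := ModuleCat.ofHom <| ((LinearMap.ker pr1).liftQ s hker).comp eqv2.symm.toLinearMap
    refine ⟨ψ, ?_⟩
    have hψ : ∀ x : D, ψ (pr1 x) = s x := by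
      intro x
      have h1 : eqv2 (Submodule.Quotient.mk x) = pr1 x := rfl
      have h2 : eqv2.symm (pr1 x) = Submodule.Quotient.mk x :=
        (LinearEquiv.symm_apply_eq _).mpr h1.symm
      show ((LinearMap.ker pr1).liftQ s hker) (eqv2.symm (pr1 x)) = s x
      rw [h2]
      exact Submodule.liftQ_apply _ _ _
    apply ModuleCat.hom_ext; apply LinearMap.ext; intro a
    have hda : ((f a, (0 : ↑(P 0))) : ↑M × ↑(P 0)) ∈ D := by
      rw [LinearMap.mem_ker, hd]
      dsimp only
      rw [hfg.apply_apply_eq_zero, map_zero, map_zero, sub_zero]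
    have h6 : pr1 ⟨(f a, 0), hda⟩ = f a := rfl
    have h7 : fe.symm (w ⟨(f a, 0), hda⟩) = a := by
      apply hf
      rw [hfe' (w _), hwx ⟨(f a, 0), hda⟩]
      show f a - t 0 = f a
      rw [map_zero, sub_zero]
    show ψ (f a) = α a
    rw [← h6, hψ ⟨(f a, 0), hda⟩, hs, h7]
    show v 0 + α a = α a
    rw [map_zero, zero_add]
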